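/- In a projective rectangle of order (m,n), every special line has exactly n+1 points and every ordinary line has exactly m+1 points. -/

import Mathlib

open scoped Classical

/-- A projective rectangle: an incidence structure satisfying axioms (A1)–(A6). -/
structure ProjRect (P L : Type*) where
  incid : P → L → Prop
  /-- (A4) the special point -/
  D : P
  /-- (A1) every two distinct points are incident with exactly one line -/
  A1 : ∀ p q : P, p ≠ q → ∃! l : L, incid p l ∧ incid q l
  /-- (A2) there exist four points with no three collinear -/
  A2 : ∃ p1 p2 p3 p4 : P, p1 ≠ p2 ∧ p1 ≠ p3 ∧ p1 ≠ p4 ∧ p2 ≠ p3 ∧ p2 ≠ p4 ∧ p3 ≠ p4 ∧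
    ∀ l : L, ¬(incid p1 l ∧ incid p2 l ∧ incid p3 l) ∧ ¬(incid p1 l ∧ incid p2 l ∧ incid p4 l) ∧
      ¬(incid p1 l ∧ incid p3 l ∧ incid p4 l) ∧ ¬(incid p2 l ∧ incid p3 l ∧ incid p4 l)
  /-- (A3) every line has at least three points -/
  A3 : ∀ l : L, ∃ p1 p2 p3 : P, p1 ≠ p2 ∧ p1 ≠ p3 ∧ p2 ≠ p3 ∧
    incid p1 l ∧ incid p2 l ∧ incid p3 l
  /-- (A5) each special line intersects every other line in exactly one point -/
  A5 : ∀ s l : L, incid D s → l ≠ s → ∃! p : P, incid p s ∧ incid p l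
  /-- (A6) Pasch-type axiom -/
  A6 : ∀ l1 l2 g h : L, ¬incid D l1 → ¬incid D l2 → (∃ p : P, incid p l1 ∧ incid p l2) →
    (∃ p1 p2 p3 p4 : P, p1 ≠ p2 ∧ p1 ≠ p3 ∧ p1 ≠ p4 ∧ p2 ≠ p3 ∧ p2 ≠ p4 ∧ p3 ≠ p4 ∧
      incid p1 g ∧ incid p1 l1 ∧ incid p2 g ∧ incid p2 l2 ∧
      incid p3 h ∧ incid p3 l1 ∧ incid p4 h ∧ incid p4 l2) →
    ∃ p : P, incid p g ∧ incid p h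

namespace ProjRect

variable {P L : Type*} (R : ProjRect P L)

/-- A line is special if it is incident with the special point `D`. -/
def SpecialLine (l : L) : Prop := R.incid R.D l

/-- A line is ordinary if it is not incident with `D`. -/
def OrdinaryLine (l : L) : Prop := ¬ R.incid R.D l

/-- A point is ordinary if it is not `D`. -/
def OrdinaryPoint (p : P) : Prop := p ≠ R.D

/-- The set of points of a line. -/
def points (l : L) : Set P := {p | R.incid p l}

/-- `R` has order `(m, n)`: there are `m+1` special lines, each with `n+1` points. -/
def HasOrder (m n : ℕ) : Prop :=
  {l : L | R.SpecialLine l}.ncard = m + 1 ∧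
  ∀ l : L, R.SpecialLine l → (R.points l).ncard = n + 1

/-- Nontrivial: there exist two disjoint ordinary lines (i.e. `R` is not a projective plane). -/
def Nontrivial : Prop :=
  ∃ l1 l2 : L, R.OrdinaryLine l1 ∧ R.OrdinaryLine l2 ∧ ∀ p : P, ¬(R.incid p l1 ∧ R.incid p l2)

/-- An incidence substructure `(Ps, Ls)` that is a projective plane. -/
def IsSubplane (Ps : Set P) (Ls : Set L) : Prop :=
  (∀ p ∈ Ps, ∀ q ∈ Ps, p ≠ q → ∃! l : L, l ∈ Ls ∧ R.incid p l ∧ R.incid q l) ∧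
  (∀ l ∈ Ls, ∀ l' ∈ Ls, l ≠ l' → ∃! p : P, p ∈ Ps ∧ R.incid p l ∧ R.incid p l') ∧
  (∀ l ∈ Ls, ∀ p : P, R.incid p l → p ∈ Ps) ∧
  (∃ p1 ∈ Ps, ∃ p2 ∈ Ps, ∃ p3 ∈ Ps, ∃ p4 ∈ Ps,
    p1 ≠ p2 ∧ p1 ≠ p3 ∧ p1 ≠ p4 ∧ p2 ≠ p3 ∧ p2 ≠ p4 ∧ p3 ≠ p4 ∧
    ∀ l ∈ Ls, ¬(R.incid p1 l ∧ R.incid p2 l ∧ R.incid p3 l) ∧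
      ¬(R.incid p1 l ∧ R.incid p2 l ∧ R.incid p4 l) ∧
      ¬(R.incid p1 l ∧ R.incid p3 l ∧ R.incid p4 l) ∧
      ¬(R.incid p2 l ∧ R.incid p3 l ∧ R.incid p4 l))

/-- A plane: a maximal subplane. -/
def IsPlane (Ps : Set P) (Ls : Set L) : Prop :=
  R.IsSubplane Ps Ls ∧
  ∀ Ps' Ls', R.IsSubplane Ps' Ls' → Ps ⊆ Ps' → Ls ⊆ Ls' → Ps = Ps' ∧ Ls = Ls'

/-- The graph of lines: vertices are the ordinary lines, adjacent iff they intersect. -/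
def lineGraph : SimpleGraph {l : L // R.OrdinaryLine l} where
  Adj l1 l2 := l1 ≠ l2 ∧ ∃ p : P, R.incid p l1.1 ∧ R.incid p l2.1
  symm := by
    constructor
    rintro a b ⟨hne, p, h1, h2⟩
    exact ⟨hne.symm, p, h2, h1⟩
  loopless := by
    constructor
    rintro a ⟨hne, -⟩
    exact hne rfl

end ProjRect

/-- In a projective rectangle of order (m,n), every special line has exactly
n+1 points and every ordinary line has exactly m+1 points. -/
theorem stmt0 {P L : Type*} [Fintype P] [Fintype L] (R : ProjRect P L) (m n : ℕ)
    (h : R.HasOrder m n) :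
    (∀ l : L, R.SpecialLine l → (R.points l).ncard = n + 1) ∧
    (∀ l : L, R.OrdinaryLine l → (R.points l).ncard = m + 1) := by
  refine ⟨h.2, ?_⟩
  intro l hl
  classical
  -- map each point of l to the special line through it and D
  have hDl : ¬ R.incid R.D l := hl
  set f : P → L := fun p => if hp : p ≠ R.D then (R.A1 p R.D hp).choose else l with hf
  have hfspec : ∀ p, R.incid p l → R.SpecialLine (f p) ∧ R.incid p (f p) := by
    intro p hp
    have hpD : p ≠ R.D := fun e => hDl (e ▸ hp)
    have := (R.A1 p R.D hpD).choose_spec.1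
    simp only [hf, dif_pos hpD]
    exact ⟨this.2, this.1⟩
  have hbij : Set.BijOn f (R.points l) {s : L | R.SpecialLine s} := by
    refine ⟨fun p hp => (hfspec p hp).1, ?_, ?_⟩
    · intro p hp q hq hpq
      have hs : R.SpecialLine (f p) := (hfspec p hp).1
      have hls : l ≠ f p := fun e => hDl (e ▸ hs)
      obtain ⟨x, -, hux⟩ := R.A5 (f p) l hs hls
      have h1 := hux p ⟨(hfspec p hp).2, hp⟩
      have h2 := hux q ⟨hpq ▸ (hfspec q hq).2, hq⟩
      exact h1.trans h2.symm
    · intro s hs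
      have hls : l ≠ s := fun e => hDl (e ▸ hs)
      obtain ⟨p, ⟨hps, hpl⟩, -⟩ := R.A5 s l hs hls
      refine ⟨p, hpl, ?_⟩
      have hpD : p ≠ R.D := fun e => hDl (e ▸ hpl)
      have huniq := (R.A1 p R.D hpD).choose_spec.2
      have h1 : f p = (R.A1 p R.D hpD).choose := dif_pos hpD
      exact h1.trans (huniq s ⟨hps, hs⟩).symm
  calc (R.points l).ncard = (f '' R.points l).ncard :=
        (Set.ncard_image_of_injOn hbij.injOn).symm
    _ = {s : L | R.SpecialLine s}.ncard := by rw [hbij.image_eq]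
    _ = m + 1 := h.1
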